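/- Let X be a real Hilbert space, K ⊆ X a nonempty closed convex cone, A : X → X strongly monotone with constant m_A and Lipschitz, f ∈ C(I;X), S : C(I;X) → C(I;X) a history-dependent operator, and j : X × K → ℝ satisfying condition (j) with Y = X and constant α_j. If α_j + 1 < m_A, then there exists a unique u ∈ C(I;K) such that for all t ∈ I: u(t) ∈ K and j(u(t), v) - j(u(t), u(t)) ≥ ⟨f(t) - Au(t) - Su(t), v - u(t)⟩ for all v ∈ K. -/

import Mathlib

set_option maxHeartbeats 1000000

open RealInnerProductSpace

lemma prox_exists {X : Type*} [NormedAddCommGroup X] [InnerProductSpace ℝ X] [CompleteSpace X]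
    (K : Set X) (hKne : K.Nonempty) (hKcl : IsClosed K) (hKcv : Convex ℝ K)
    (φ : X → ℝ) (hφ : ConvexOn ℝ K φ) (L : ℝ) (hL : 0 ≤ L)
    (hφlip : ∀ v ∈ K, ∀ w ∈ K, |φ v - φ w| ≤ L * ‖v - w‖) (x : X) :
    ∃ w ∈ K, ∀ v ∈ K, 0 ≤ ⟪w - x, v - w⟫ + φ v - φ w := by
  classical
  set F : X → ℝ := fun v => (1/2) * ‖v - x‖^2 + φ v with hFdef
  obtain ⟨v₀, hv₀⟩ := hKne
  -- lower bound
  have hlb : ∀ v ∈ K, φ v₀ - L * ‖x - v₀‖ - L^2/2 ≤ F v := by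
    intro v hv
    have h1 : |φ v₀ - φ v| ≤ L * ‖v₀ - v‖ := hφlip v₀ hv₀ v hv
    have h2 : ‖v₀ - v‖ ≤ ‖x - v₀‖ + ‖v - x‖ := by
      have := norm_sub_le_norm_sub_add_norm_sub v₀ x v
      have e1 : ‖v₀ - x‖ = ‖x - v₀‖ := norm_sub_rev _ _
      have e2 : ‖x - v‖ = ‖v - x‖ := norm_sub_rev _ _
      linarith
    have h3 : φ v₀ - φ v ≤ |φ v₀ - φ v| := le_abs_self _
    have h4 : (0:ℝ) ≤ (‖v - x‖ - L)^2 := sq_nonneg _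
    have h5 : (0:ℝ) ≤ ‖v₀ - v‖ := norm_nonneg _
    simp only [hFdef]
    nlinarith [norm_nonneg (v - x), norm_nonneg (x - v₀)]
  set d : ℝ := sInf (F '' K) with hddef
  have hbdd : BddBelow (F '' K) := by
    refine ⟨φ v₀ - L * ‖x - v₀‖ - L^2/2, ?_⟩
    rintro y ⟨v, hv, rfl⟩; exact hlb v hv
  have hdle : ∀ v ∈ K, d ≤ F v := fun v hv => csInf_le hbdd ⟨v, hv, rfl⟩
  have hne : (F '' K).Nonempty := ⟨F v₀, v₀, hv₀, rfl⟩
  -- minimizing sequence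
  have hseq : ∀ n : ℕ, ∃ v ∈ K, F v < d + 1/(n+1) := by
    intro n
    obtain ⟨y, ⟨v, hv, rfl⟩, hy⟩ := Real.lt_sInf_add_pos hne
      (by positivity : (0:ℝ) < 1/(n+1))
    exact ⟨v, hv, hy⟩
  choose v hvK hvF using hseq
  -- key quadratic estimate
  have hkey : ∀ a b : ℕ, ‖v a - v b‖^2 ≤ 4 * (1/(a+1) + 1/(b+1)) := by
    intro a b
    set m : X := (1/2 : ℝ) • v a + (1/2 : ℝ) • v b with hm
    have hmK : m ∈ K := hKcv (hvK a) (hvK b) (by norm_num) (by norm_num) (by norm_num)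
    have hφm : φ m ≤ (1/2) * φ (v a) + (1/2) * φ (v b) :=
      hφ.2 (hvK a) (hvK b) (by norm_num) (by norm_num) (by norm_num)
    have par := parallelogram_law_with_norm ℝ (v a - x) (v b - x)
    have e1 : (v a - x) + (v b - x) = (2:ℝ) • (m - x) := by
      simp only [hm]; module
    have e2 : (v a - x) - (v b - x) = v a - v b := by abel
    rw [e1, e2, norm_smul] at par
    have hdm := hdle m hmK
    have hFa := (hvF a).le
    have hFb := (hvF b).le
    simp only [hFdef] at hFa hFb hdm ⊢
    have : ‖(2:ℝ)‖ = 2 := by norm_num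
    rw [this] at par
    nlinarith [norm_nonneg (v a - v b)]
  -- Cauchy
  have hcauchy : CauchySeq v := by
    refine cauchySeq_of_le_tendsto_0 (fun N => Real.sqrt (8/(N+1))) (fun n m N hn hm => ?_) ?_
    · 
      rw [dist_eq_norm]
      have h1 : (1:ℝ)/(n+1) ≤ 1/(N+1) := by
        apply one_div_le_one_div_of_le (by positivity)
        have : (N:ℝ) ≤ n := Nat.cast_le.2 hn
        linarith
      have h2 : (1:ℝ)/(m+1) ≤ 1/(N+1) := by
        apply one_div_le_one_div_of_le (by positivity)
        have : (N:ℝ) ≤ m := Nat.cast_le.2 hm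
        linarith
      have h3 : ‖v n - v m‖^2 ≤ 8/(N+1) := by
        have := hkey n m
        have e : (8:ℝ)/(N+1) = 4 * (1/(N+1) + 1/(N+1)) := by ring
        rw [e]; nlinarith
      have := Real.sqrt_le_sqrt h3
      rwa [Real.sqrt_sq (norm_nonneg _)] at this
    · have h0 : Filter.Tendsto (fun N : ℕ => (8:ℝ)/(N+1)) Filter.atTop (nhds 0) := by
        have := tendsto_one_div_add_atTop_nhds_zero_nat.const_mul (8:ℝ)
        simpa [div_eq_mul_inv, one_div, mul_comm] using this
      have := (Real.continuous_sqrt.tendsto' 0 0 Real.sqrt_zero).comp h0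
      simpa only [Function.comp_def] using this
  obtain ⟨w, hw⟩ := cauchySeq_tendsto_of_complete hcauchy
  have hwK : w ∈ K := hKcl.mem_of_tendsto hw (Filter.Eventually.of_forall hvK)
  -- φ continuity along the sequence
  have hφt : Filter.Tendsto (fun n => φ (v n)) Filter.atTop (nhds (φ w)) := by
    rw [tendsto_iff_dist_tendsto_zero]
    apply squeeze_zero (fun n => dist_nonneg) (fun n => ?_)
    · have hn0 : Filter.Tendsto (fun n => ‖v n - w‖) Filter.atTop (nhds 0) := by
        have := (continuous_norm.tendsto (w - w)).comp (hw.sub_const w)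
        simpa [Function.comp_def] using this
      simpa using hn0.const_mul L
    · rw [Real.dist_eq]; exact hφlip (v n) (hvK n) w hwK
  have hFt : Filter.Tendsto (fun n => F (v n)) Filter.atTop (nhds (F w)) := by
    have hq : Filter.Tendsto (fun n => (1/2:ℝ) * ‖v n - x‖^2) Filter.atTop
        (nhds ((1/2) * ‖w - x‖^2)) := by
      have : Continuous fun y : X => (1/2:ℝ) * ‖y - x‖^2 := by continuity
      exact (this.tendsto w).comp hw
    simpa only [hFdef] using hq.add hφt
  have hFwd : F w ≤ d := by
    have h2 : Filter.Tendsto (fun n : ℕ => d + 1/(n+1)) Filter.atTop (nhds d) := by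
      simpa using (tendsto_const_nhds (x := d)).add tendsto_one_div_add_atTop_nhds_zero_nat
    exact le_of_tendsto_of_tendsto hFt h2 (Filter.Eventually.of_forall fun n => (hvF n).le)
  have hmin : ∀ u ∈ K, F w ≤ F u := fun u hu => hFwd.trans (hdle u hu)
  -- derive the VI
  refine ⟨w, hwK, fun u hu => ?_⟩
  set E : ℝ := ⟪w - x, u - w⟫ + φ u - φ w with hEdef
  have hstep : ∀ t : ℝ, 0 < t → t ≤ 1 → 0 ≤ E + t/2 * ‖u - w‖^2 := by
    intro t ht0 ht1
    have hwtK : w + t • (u - w) ∈ K := by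
      have : w + t • (u - w) = (1 - t) • w + t • u := by module
      rw [this]
      exact hKcv hwK hu (by linarith) ht0.le (by ring)
    have hFle := hmin _ hwtK
    have hφle : φ (w + t • (u - w)) ≤ (1 - t) * φ w + t * φ u := by
      have : w + t • (u - w) = (1 - t) • w + t • u := by module
      rw [this]
      exact hφ.2 hwK hu (by linarith) ht0.le (by ring)
    have hnorm : ‖(w + t • (u - w)) - x‖^2
        = ‖w - x‖^2 + 2 * (t * ⟪w - x, u - w⟫) + t^2 * ‖u - w‖^2 := by
      have e : (w + t • (u - w)) - x = (w - x) + t • (u - w) := by abel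
      rw [e, norm_add_sq_real (w - x) (t • (u - w)), real_inner_smul_right, norm_smul]
      have : ‖t‖ = t := by rw [Real.norm_eq_abs, abs_of_pos ht0]
      rw [this]; ring
    simp only [hFdef] at hFle
    rw [hnorm] at hFle
    have h6 : 0 ≤ t * (⟪w - x, u - w⟫ + φ u - φ w) + t^2/2 * ‖u - w‖^2 := by nlinarith
    have h7 : 0 ≤ t * (E + t/2 * ‖u - w‖^2) := by simp only [hEdef]; nlinarith
    nlinarith
  by_contra hcon
  push_neg at hcon
  rcases eq_or_lt_of_le (norm_nonneg (u - w)) with hz | hz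
  · have := hstep 1 one_pos le_rfl
    rw [← hz] at this
    simp at this
    linarith
  · set t0 : ℝ := min 1 (-E/‖u - w‖^2) with ht0def
    have hEneg : E < 0 := hcon
    have hc : 0 < ‖u - w‖^2 := by positivity
    have ht0pos : 0 < t0 := lt_min one_pos (div_pos (neg_pos.2 hcon) hc)
    have ht0le : t0 ≤ 1 := min_le_left _ _
    have := hstep t0 ht0pos ht0le
    have ht02 : t0 ≤ -E/‖u - w‖^2 := min_le_right _ _
    have : t0/2 * ‖u - w‖^2 ≤ -E/2 := by
      rw [div_mul_eq_mul_div, div_le_div_iff₀ (by norm_num) (by norm_num)]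
      calc t0 * ‖u - w‖^2 * 2 ≤ (-E/‖u - w‖^2) * ‖u - w‖^2 * 2 := by nlinarith
        _ = -E * 2 := by field_simp
    linarith [hstep t0 ht0pos ht0le]

/-- Lipschitz/uniqueness estimate for the elliptic quasi-variational inequality. -/
lemma ell_lip {X : Type*} [NormedAddCommGroup X] [InnerProductSpace ℝ X]
    (K : Set X)
    (A : X → X) (mA : ℝ)
    (hAmono : ∀ u v : X, mA * ‖u - v‖ ^ 2 ≤ ⟪A u - A v, u - v⟫)
    (j : X → X → ℝ) (αj : ℝ)
    (hjb : ∀ η₁ η₂ : X, ∀ v₁ ∈ K, ∀ v₂ ∈ K,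
      j η₁ v₂ - j η₁ v₁ + j η₂ v₁ - j η₂ v₂ ≤ αj * ‖η₁ - η₂‖ * ‖v₁ - v₂‖)
    (hsm : αj < mA)
    (g₁ g₂ u₁ u₂ : X) (hu₁ : u₁ ∈ K) (hu₂ : u₂ ∈ K)
    (hVI₁ : ∀ v ∈ K, 0 ≤ ⟪A u₁ - g₁, v - u₁⟫ + j u₁ v - j u₁ u₁)
    (hVI₂ : ∀ v ∈ K, 0 ≤ ⟪A u₂ - g₂, v - u₂⟫ + j u₂ v - j u₂ u₂) :
    (mA - αj) * ‖u₁ - u₂‖ ≤ ‖g₁ - g₂‖ := by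
  have h1 := hVI₁ u₂ hu₂
  have h2 := hVI₂ u₁ hu₁
  have hb := hjb u₁ u₂ u₁ hu₁ u₂ hu₂
  have hmono := hAmono u₁ u₂
  have hcs := real_inner_le_norm (g₁ - g₂) (u₁ - u₂)
  have key : ⟪A u₁ - g₁, u₂ - u₁⟫ + ⟪A u₂ - g₂, u₁ - u₂⟫
      = -⟪A u₁ - A u₂, u₁ - u₂⟫ + ⟪g₁ - g₂, u₁ - u₂⟫ := by
    have e1 : (u₂ : X) - u₁ = -(u₁ - u₂) := by abel
    rw [e1, inner_neg_right]
    simp only [inner_sub_left]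
    ring
  rcases eq_or_lt_of_le (norm_nonneg (u₁ - u₂)) with hz | hz
  · rw [← hz]; simpa using norm_nonneg (g₁ - g₂)
  · have hsq : (mA - αj) * ‖u₁ - u₂‖^2 ≤ ‖g₁ - g₂‖ * ‖u₁ - u₂‖ := by nlinarith
    nlinarith

/-- Existence for the elliptic quasi-variational inequality. -/
lemma ell_exists {X : Type*} [NormedAddCommGroup X] [InnerProductSpace ℝ X] [CompleteSpace X]
    (K : Set X) (hKne : K.Nonempty) (hKcl : IsClosed K) (hKcv : Convex ℝ K)
    (A : X → X) (mA : ℝ) (hmA : 0 < mA)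
    (hAmono : ∀ u v : X, mA * ‖u - v‖ ^ 2 ≤ ⟪A u - A v, u - v⟫)
    (hAlip : ∃ LA : ℝ, 0 < LA ∧ ∀ u v : X, ‖A u - A v‖ ≤ LA * ‖u - v‖)
    (j : X → X → ℝ)
    (hjconv : ∀ η : X, ConvexOn ℝ K (j η))
    (hjlip : ∀ η : X, ∃ Lj : ℝ, ∀ v ∈ K, ∀ w ∈ K, |j η v - j η w| ≤ Lj * ‖v - w‖)
    (αj : ℝ) (hαj : 0 ≤ αj)
    (hjb : ∀ η₁ η₂ : X, ∀ v₁ ∈ K, ∀ v₂ ∈ K,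
      j η₁ v₂ - j η₁ v₁ + j η₂ v₁ - j η₂ v₂ ≤ αj * ‖η₁ - η₂‖ * ‖v₁ - v₂‖)
    (hsm : αj < mA) (g : X) :
    ∃ u ∈ K, ∀ v ∈ K, 0 ≤ ⟪A u - g, v - u⟫ + j u v - j u u := by
  classical
  obtain ⟨LA, hLA, hAlip⟩ := hAlip
  haveI : Nonempty K := hKne.to_subtype
  haveI : CompleteSpace K := hKcl.completeSpace_coe
  set ρ : ℝ := mA / LA^2 with hρdef
  have hρ : 0 < ρ := by positivity
  set β : ℝ := max (1 - mA^2/LA^2) 0 with hβdef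
  have hβ0 : 0 ≤ β := le_max_right _ _
  have hβ1 : β < 1 := by
    apply max_lt _ one_pos
    have : 0 < mA^2/LA^2 := by positivity
    linarith
  -- Step 1: for each fixed η, solve the elliptic VI of the second kind.
  have step1 : ∀ η : X, ∃ w ∈ K, ∀ v ∈ K, 0 ≤ ⟪A w - g, v - w⟫ + j η v - j η w := by
    intro η
    obtain ⟨Lj, hLj⟩ := hjlip η
    set L' : ℝ := max Lj 0 with hL'def
    set φ : X → ℝ := fun v => ρ * j η v with hφdef
    have hφconv : ConvexOn ℝ K φ := by
      refine ⟨hKcv, fun a ha b hb p q hp hq hpq => ?_⟩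
      have := (hjconv η).2 ha hb hp hq hpq
      simp only [hφdef, smul_eq_mul]
      calc ρ * j η (p • a + q • b) ≤ ρ * (p * j η a + q * j η b) :=
            mul_le_mul_of_nonneg_left (by simpa using this) hρ.le
        _ = p * (ρ * j η a) + q * (ρ * j η b) := by ring
    have hφlip : ∀ v ∈ K, ∀ w ∈ K, |φ v - φ w| ≤ (ρ * L') * ‖v - w‖ := by
      intro v hv w hw
      have h1 : |j η v - j η w| ≤ Lj * ‖v - w‖ := hLj v hv w hw
      have h2 : Lj * ‖v - w‖ ≤ L' * ‖v - w‖ :=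
        mul_le_mul_of_nonneg_right (le_max_left _ _) (norm_nonneg _)
      have : |φ v - φ w| = ρ * |j η v - j η w| := by
        simp only [hφdef]
        rw [← mul_sub, abs_mul, abs_of_pos hρ]
      rw [this, mul_assoc]
      exact mul_le_mul_of_nonneg_left (h1.trans h2) hρ.le
    have hprox := fun x : X => prox_exists K ⟨_, hKne.choose_spec⟩ hKcl hKcv φ hφconv
      (ρ * L') (by positivity) hφlip x
    choose P hPK hPvi using hprox
    -- the proximity operator is nonexpansive
    have hPlip : ∀ x₁ x₂ : X, ‖P x₁ - P x₂‖ ≤ ‖x₁ - x₂‖ := by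
      intro x₁ x₂
      have h1 := hPvi x₁ (P x₂) (hPK x₂)
      have h2 := hPvi x₂ (P x₁) (hPK x₁)
      have hcs := real_inner_le_norm (x₁ - x₂) (P x₁ - P x₂)
      have key : ⟪P x₁ - x₁, P x₂ - P x₁⟫ + ⟪P x₂ - x₂, P x₁ - P x₂⟫
          = -‖P x₁ - P x₂‖^2 + ⟪x₁ - x₂, P x₁ - P x₂⟫ := by
        have e1 : (P x₂ : X) - P x₁ = -(P x₁ - P x₂) := by abel
        rw [e1, inner_neg_right]
        simp only [inner_sub_left]
        have := real_inner_self_eq_norm_sq (P x₁ - P x₂)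
        simp only [inner_sub_left, inner_sub_right] at this ⊢
        ring_nf
        ring_nf at this
        linarith [this]
      rcases eq_or_lt_of_le (norm_nonneg (P x₁ - P x₂)) with hz | hz
      · rw [← hz]; exact norm_nonneg _
      · nlinarith
    -- the contraction map
    set Φ : K → K := fun w => ⟨P ((w : X) - ρ • (A w - g)), hPK _⟩ with hΦdef
    have hΦlip : ∀ w₁ w₂ : K, dist (Φ w₁) (Φ w₂) ≤ Real.sqrt β * dist w₁ w₂ := by
      intro w₁ w₂
      have hd : dist (Φ w₁) (Φ w₂)
          ≤ ‖((w₁ : X) - ρ • (A w₁ - g)) - ((w₂ : X) - ρ • (A w₂ - g))‖ := by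
        rw [Subtype.dist_eq, dist_eq_norm]
        exact hPlip _ _
      have e : ((w₁ : X) - ρ • (A w₁ - g)) - ((w₂ : X) - ρ • (A w₂ - g))
          = ((w₁ : X) - w₂) - ρ • (A w₁ - A w₂) := by
        module
      rw [e] at hd
      have hmono := hAmono w₁ w₂
      have hlipA := hAlip w₁ w₂
      have hnsq : ‖((w₁ : X) - w₂) - ρ • (A w₁ - A w₂)‖^2
          = ‖(w₁ : X) - w₂‖^2 - 2 * (ρ * ⟪A w₁ - A w₂, (w₁ : X) - w₂⟫)
            + ρ^2 * ‖A w₁ - A w₂‖^2 := by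
        rw [norm_sub_sq_real, real_inner_smul_right, real_inner_comm, norm_smul]
        have : ‖ρ‖ = ρ := by rw [Real.norm_eq_abs, abs_of_pos hρ]
        rw [this]; ring
      have hAsq : ‖A w₁ - A w₂‖^2 ≤ LA^2 * ‖(w₁ : X) - w₂‖^2 := by
        have h0 : (0:ℝ) ≤ LA * ‖(w₁ : X) - w₂‖ := by positivity
        nlinarith [norm_nonneg (A (w₁:X) - A w₂)]
      have hfac : 1 - 2 * (ρ * mA) + ρ^2 * LA^2 ≤ β := by
        have : 1 - 2 * (ρ * mA) + ρ^2 * LA^2 = 1 - mA^2/LA^2 := by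
          rw [hρdef]; field_simp; ring
        rw [this]; exact le_max_left _ _
      have hsq : ‖((w₁ : X) - w₂) - ρ • (A w₁ - A w₂)‖^2 ≤ β * ‖(w₁ : X) - w₂‖^2 := by
        rw [hnsq]; nlinarith [norm_nonneg ((w₁:X) - w₂)]
      have := Real.sqrt_le_sqrt hsq
      rw [Real.sqrt_mul hβ0, Real.sqrt_sq (norm_nonneg _),
        Real.sqrt_sq (norm_nonneg _)] at this
      calc dist (Φ w₁) (Φ w₂) ≤ ‖((w₁ : X) - w₂) - ρ • (A w₁ - A w₂)‖ := hd
        _ ≤ Real.sqrt β * ‖(w₁ : X) - w₂‖ := this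
        _ = Real.sqrt β * dist w₁ w₂ := by rw [Subtype.dist_eq, dist_eq_norm]
    have hc : ContractingWith (Real.toNNReal (Real.sqrt β)) Φ := by
      constructor
      · rw [← NNReal.coe_lt_coe, Real.coe_toNNReal _ (Real.sqrt_nonneg _)]
        calc Real.sqrt β < Real.sqrt 1 := Real.sqrt_lt_sqrt hβ0 hβ1
          _ = 1 := Real.sqrt_one
      · apply LipschitzWith.of_dist_le_mul
        intro w₁ w₂
        rw [Real.coe_toNNReal _ (Real.sqrt_nonneg _)]
        exact hΦlip w₁ w₂
    set w : K := hc.fixedPoint Φ with hwdef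
    have hfix : Φ w = w := hc.fixedPoint_isFixedPt
    have hPfix : P ((w : X) - ρ • (A w - g)) = (w : X) := by
      have := congrArg (Subtype.val) hfix
      simpa [hΦdef] using this
    refine ⟨(w : X), w.2, fun v hv => ?_⟩
    have hvi := hPvi ((w : X) - ρ • (A w - g)) v hv
    rw [hPfix] at hvi
    have e : (w : X) - ((w : X) - ρ • (A w - g)) = ρ • (A w - g) := by abel
    rw [e, real_inner_smul_left] at hvi
    simp only [hφdef] at hvi
    have : 0 ≤ ρ * (⟪A w - g, v - w⟫ + j η v - j η w) := by ring_nf; ring_nf at hvi; linarith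
    nlinarith
  -- Step 2: Banach fixed point in η.
  choose sol hsolK hsolVI using step1
  set Ψ : K → K := fun η => ⟨sol η, hsolK η⟩ with hΨdef
  have hΨlip : ∀ η₁ η₂ : K, dist (Ψ η₁) (Ψ η₂) ≤ (αj/mA) * dist η₁ η₂ := by
    intro η₁ η₂
    have h1 := hsolVI η₁ (sol η₂) (hsolK η₂)
    have h2 := hsolVI η₂ (sol η₁) (hsolK η₁)
    have hb := hjb η₁ η₂ (sol η₁) (hsolK η₁) (sol η₂) (hsolK η₂)
    have hmono := hAmono (sol η₁) (sol η₂)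
    have key : ⟪A (sol η₁) - g, sol η₂ - sol η₁⟫ + ⟪A (sol η₂) - g, sol η₁ - sol η₂⟫
        = -⟪A (sol η₁) - A (sol η₂), sol η₁ - sol η₂⟫ := by
      have e1 : sol η₂ - sol η₁ = -(sol η₁ - sol η₂) := by abel
      rw [e1, inner_neg_right]
      simp only [inner_sub_left]
      ring
    rw [Subtype.dist_eq, Subtype.dist_eq, dist_eq_norm, dist_eq_norm]
    simp only [hΨdef]
    rcases eq_or_lt_of_le (norm_nonneg (sol (η₁:X) - sol (η₂:X))) with hz | hz
    · rw [← hz]; positivity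
    · have hcs : ⟪A (sol η₁) - A (sol η₂), sol η₁ - sol η₂⟫
          ≤ αj * ‖(η₁:X) - η₂‖ * ‖sol (η₁:X) - sol (η₂:X)‖ := by nlinarith
      have h3 : mA * ‖sol (η₁:X) - sol (η₂:X)‖^2
          ≤ αj * ‖(η₁:X) - η₂‖ * ‖sol (η₁:X) - sol (η₂:X)‖ := le_trans hmono hcs
      rw [div_mul_eq_mul_div, le_div_iff₀ hmA]
      nlinarith
  have hcΨ : ContractingWith (Real.toNNReal (αj/mA)) Ψ := by
    constructor
    · rw [← NNReal.coe_lt_coe, Real.coe_toNNReal _ (by positivity)]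
      simpa using (div_lt_one hmA).2 hsm
    · apply LipschitzWith.of_dist_le_mul
      intro η₁ η₂
      rw [Real.coe_toNNReal _ (by positivity)]
      exact hΨlip η₁ η₂
  set u : K := hcΨ.fixedPoint Ψ with hudef
  have hfix : Ψ u = u := hcΨ.fixedPoint_isFixedPt
  have hsfix : sol (u : X) = (u : X) := by
    have := congrArg (Subtype.val) hfix
    simpa [hΨdef] using this
  refine ⟨(u : X), u.2, fun v hv => ?_⟩
  have := hsolVI (u : X) v hv
  rwa [hsfix] at this

/-- Picard iteration on a compact interval for the history-dependent fixed point problem. -/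
lemma picard_interval {X : Type*} [NormedAddCommGroup X] [InnerProductSpace ℝ X] [CompleteSpace X]
    (b : ℝ) (hb : 0 < b)
    (σ : X → X) (κ : ℝ) (hκ : 0 ≤ κ)
    (hσlip : ∀ g₁ g₂ : X, ‖σ g₁ - σ g₂‖ ≤ κ * ‖g₁ - g₂‖)
    (S : (ℝ → X) → (ℝ → X)) (hSmap : ∀ u : ℝ → X, Continuous u → Continuous (S u))
    (L : ℝ) (hL : 0 ≤ L)
    (hSvol : ∀ u₁ u₂ : ℝ → X, Continuous u₁ → Continuous u₂ → ∀ t ∈ Set.Icc (0:ℝ) b,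
      ‖S u₁ t - S u₂ t‖ ≤ L * ∫ s in (0:ℝ)..t, ‖u₁ s - u₂ s‖)
    (f : ℝ → X) (hf : Continuous f) :
    ∃ u : ℝ → X, Continuous u ∧ ∀ t ∈ Set.Icc (0:ℝ) b, u t = σ (f t - S u t) := by
  classical
  haveI : CompactSpace (Set.Icc (0:ℝ) b) := isCompact_iff_compactSpace.mp isCompact_Icc
  set E := C(Set.Icc (0:ℝ) b, X) with hEdef
  haveI : Nonempty E := ⟨ContinuousMap.const _ (σ 0)⟩
  have hσcont : Continuous σ := by
    have : LipschitzWith (Real.toNNReal κ) σ := by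
      apply LipschitzWith.of_dist_le_mul
      intro x y
      rw [Real.coe_toNNReal _ hκ, dist_eq_norm, dist_eq_norm]
      exact hσlip x y
    exact this.continuous
  -- the extension operator and the Picard map
  have hextc : ∀ u : E, Continuous (Set.IccExtend hb.le u) := fun u => u.continuous.Icc_extend'
  set Λ : E → E := fun u => ⟨fun t => σ (f t - S (Set.IccExtend hb.le u) t), by
    exact hσcont.comp (((hf.sub (hSmap _ (hextc u))).comp continuous_subtype_val))⟩ with hΛdef
  set C : ℝ := κ * L with hCdef
  have hC : 0 ≤ C := mul_nonneg hκ hL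
  -- pointwise contraction estimate for the iterates
  have hiter : ∀ (u₁ u₂ : E) (m : ℕ) (t : ℝ) (ht : t ∈ Set.Icc (0:ℝ) b),
      ‖(Λ^[m] u₁) ⟨t, ht⟩ - (Λ^[m] u₂) ⟨t, ht⟩‖
        ≤ C^m * t^m / (m.factorial : ℝ) * dist u₁ u₂ := by
    intro u₁ u₂ m
    induction m with
    | zero =>
      intro t ht
      simp only [Function.iterate_zero, id_eq, pow_zero, Nat.factorial_zero, Nat.cast_one]
      rw [← dist_eq_norm]
      simpa using ContinuousMap.dist_apply_le_dist (f := u₁) (g := u₂) ⟨t, ht⟩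
    | succ m ih =>
      intro t ht
      rw [Function.iterate_succ_apply', Function.iterate_succ_apply']
      set a₁ : E := Λ^[m] u₁
      set a₂ : E := Λ^[m] u₂
      have h1 : ‖(Λ a₁) ⟨t, ht⟩ - (Λ a₂) ⟨t, ht⟩‖
          ≤ κ * ‖S (Set.IccExtend hb.le a₁) t - S (Set.IccExtend hb.le a₂) t‖ := by
        simp only [hΛdef, ContinuousMap.coe_mk]
        have e : (f t - S (Set.IccExtend hb.le a₁) t) - (f t - S (Set.IccExtend hb.le a₂) t)
            = -(S (Set.IccExtend hb.le a₁) t - S (Set.IccExtend hb.le a₂) t) := by abel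
        have := hσlip (f t - S (Set.IccExtend hb.le a₁) t) (f t - S (Set.IccExtend hb.le a₂) t)
        rwa [e, norm_neg] at this
      have h2 : ‖S (Set.IccExtend hb.le a₁) t - S (Set.IccExtend hb.le a₂) t‖
          ≤ L * ∫ s in (0:ℝ)..t, ‖Set.IccExtend hb.le a₁ s - Set.IccExtend hb.le a₂ s‖ :=
        hSvol _ _ (hextc a₁) (hextc a₂) t ht
      have h3 : (∫ s in (0:ℝ)..t, ‖Set.IccExtend hb.le a₁ s - Set.IccExtend hb.le a₂ s‖)
          ≤ ∫ s in (0:ℝ)..t, C^m * s^m / (m.factorial : ℝ) * dist u₁ u₂ := by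
        apply intervalIntegral.integral_mono_on ht.1
        · exact ((hextc a₁).sub (hextc a₂)).norm.intervalIntegrable _ _
        · apply Continuous.intervalIntegrable
          continuity
        · intro s hs
          have hsb : s ∈ Set.Icc (0:ℝ) b := ⟨hs.1, hs.2.trans ht.2⟩
          have e1 : Set.IccExtend hb.le a₁ s = a₁ ⟨s, hsb⟩ := Set.IccExtend_of_mem hb.le _ hsb
          have e2 : Set.IccExtend hb.le a₂ s = a₂ ⟨s, hsb⟩ := Set.IccExtend_of_mem hb.le _ hsb
          rw [e1, e2]
          exact ih s hsb
      have h4 : (∫ s in (0:ℝ)..t, C^m * s^m / (m.factorial : ℝ) * dist u₁ u₂)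
          = C^m / (m.factorial : ℝ) * dist u₁ u₂ * (t^(m+1) / (m+1)) := by
        have he : ∀ s : ℝ, C^m * s^m / (m.factorial : ℝ) * dist u₁ u₂
            = (C^m / (m.factorial : ℝ) * dist u₁ u₂) * s^m := fun s => by ring
        simp only [he]
        rw [intervalIntegral.integral_const_mul, integral_pow]
        ring
      have hfact : ((m+1).factorial : ℝ) = (m+1) * (m.factorial : ℝ) := by
        rw [Nat.factorial_succ]; push_cast; ring
      calc ‖(Λ a₁) ⟨t, ht⟩ - (Λ a₂) ⟨t, ht⟩‖
          ≤ κ * (L * (C^m / (m.factorial : ℝ) * dist u₁ u₂ * (t^(m+1) / (m+1)))) := by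
            refine h1.trans (mul_le_mul_of_nonneg_left ?_ hκ)
            refine h2.trans (mul_le_mul_of_nonneg_left ?_ hL)
            rw [← h4]; exact h3
        _ = C^(m+1) * t^(m+1) / ((m+1).factorial : ℝ) * dist u₁ u₂ := by
            rw [hfact, hCdef]
            have hm1 : ((m:ℝ)+1) ≠ 0 := by positivity
            have hmf : ((m.factorial : ℝ)) ≠ 0 := Nat.cast_ne_zero.2 m.factorial_ne_zero
            field_simp
            ring
  -- sup-norm contraction estimate for iterates
  have hsup : ∀ (m : ℕ) (u₁ u₂ : E),
      dist (Λ^[m] u₁) (Λ^[m] u₂) ≤ (C*b)^m / (m.factorial : ℝ) * dist u₁ u₂ := by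
    intro m u₁ u₂
    rw [ContinuousMap.dist_le (by positivity)]
    rintro ⟨t, ht⟩
    rw [dist_eq_norm]
    refine (hiter u₁ u₂ m t ht).trans ?_
    have h1 : t^m ≤ b^m := pow_le_pow_left₀ ht.1 ht.2 m
    have h2 : C^m * t^m ≤ (C*b)^m := by
      rw [mul_pow C b m]
      exact mul_le_mul_of_nonneg_left h1 (pow_nonneg hC m)
    have h3 : (0:ℝ) < (m.factorial : ℝ) := by
      exact_mod_cast m.factorial_pos
    gcongr
  -- a contracting iterate
  obtain ⟨m, hm⟩ : ∃ m : ℕ, (C*b)^m / (m.factorial : ℝ) < 1 := by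
    have := FloorSemiring.tendsto_pow_div_factorial_atTop (C*b)
    exact (this.eventually_lt_const one_pos).exists
  have hq0 : 0 ≤ (C*b)^m / (m.factorial : ℝ) := by positivity
  have hcq : ContractingWith (Real.toNNReal ((C*b)^m / (m.factorial : ℝ))) (Λ^[m]) := by
    constructor
    · rw [← NNReal.coe_lt_coe, Real.coe_toNNReal _ hq0]
      exact hm
    · apply LipschitzWith.of_dist_le_mul
      intro u₁ u₂
      rw [Real.coe_toNNReal _ hq0]
      exact hsup m u₁ u₂
  have hfix : Function.IsFixedPt Λ (hcq.fixedPoint (Λ^[m])) :=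
    ContractingWith.isFixedPt_fixedPoint_iterate hcq
  set uh : E := hcq.fixedPoint (Λ^[m]) with huhdef
  refine ⟨Set.IccExtend hb.le uh, hextc uh, fun t ht => ?_⟩
  have h1 : Set.IccExtend hb.le uh t = uh ⟨t, ht⟩ := Set.IccExtend_of_mem hb.le _ ht
  have h2 : uh ⟨t, ht⟩ = (Λ uh) ⟨t, ht⟩ := by rw [hfix]
  rw [h1, h2]
  simp only [hΛdef, ContinuousMap.coe_mk]
  rfl

/-- Grönwall-type uniqueness on a compact interval. -/
lemma gronwall_zero {X : Type*} [NormedAddCommGroup X]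
    (b : ℝ) (C : ℝ) (hC : 0 ≤ C) (u u' : ℝ → X)
    (hu : Continuous u) (hu' : Continuous u')
    (h : ∀ t ∈ Set.Icc (0:ℝ) b, ‖u t - u' t‖ ≤ C * ∫ s in (0:ℝ)..t, ‖u s - u' s‖) :
    ∀ t ∈ Set.Icc (0:ℝ) b, u t = u' t := by
  set ψ : ℝ → ℝ := fun s => ‖u s - u' s‖ with hψdef
  have hψc : Continuous ψ := (hu.sub hu').norm
  set Φ : ℝ → ℝ := fun t => ∫ s in (0:ℝ)..t, ψ s with hΦdef
  have hΦderiv : ∀ t : ℝ, HasDerivAt Φ (ψ t) t := by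
    intro t
    exact intervalIntegral.integral_hasDerivAt_right
      (hψc.intervalIntegrable _ _)
      (hψc.stronglyMeasurableAtFilter _ _)
      hψc.continuousAt
  have hΦcont : Continuous Φ := by
    rw [continuous_iff_continuousAt]
    exact fun t => (hΦderiv t).continuousAt
  have hgb := norm_le_gronwallBound_of_norm_deriv_right_le (f := Φ) (f' := ψ)
    (δ := 0) (K := C) (ε := 0) (a := 0) (b := b)
    (hΦcont.continuousOn)
    (fun x _ => (hΦderiv x).hasDerivWithinAt)
    (by simp [hΦdef])
    (fun x hx => ?_)
  · intro t ht
    have h1 := hgb t ht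
    rw [gronwallBound_ε0_δ0] at h1
    have hΦ0 : Φ t = 0 := by
      have := abs_nonneg (Φ t)
      rw [Real.norm_eq_abs] at h1
      have := abs_eq_zero.mp (le_antisymm h1 (abs_nonneg _))
      exact this
    have h2 : ψ t ≤ C * Φ t := h t ht
    have h3 : ψ t ≤ 0 := by
      have : C * Φ t = 0 := by rw [hΦ0]; ring
      calc ψ t ≤ C * Φ t := h2
        _ = 0 := this
    have h4 : ψ t = 0 := le_antisymm h3 (norm_nonneg _)
    have := norm_eq_zero.mp h4
    exact sub_eq_zero.mp this
  · have h1 : ψ x ≤ C * Φ x := h x ⟨hx.1, hx.2.le⟩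
    skip
    have h2 : Φ x ≤ ‖Φ x‖ := le_abs_self _
    have h3 : C * Φ x ≤ C * ‖Φ x‖ := mul_le_mul_of_nonneg_left h2 hC
    rw [Real.norm_eq_abs, abs_of_nonneg (norm_nonneg _)]
    calc ψ x ≤ C * ‖Φ x‖ := h1.trans h3
      _ ≤ C * ‖Φ x‖ + 0 := by ring_nf; exact le_rfl

/-- Corollary 3.2 of the paper (variational-inequality form of the inclusion
`-u(t) ∈ N_{C(u(t),t)}(Au(t) + Su(t))`): with `Y = X`, `R = id`, `S`
history-dependent, and the smallness condition `α_j + 1 < m_A`, there is a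
unique `u ∈ C(I;K)` with
`j(u(t),v) - j(u(t),u(t)) ≥ ⟪f(t) - Au(t) - Su(t), v - u(t)⟫` for all `v ∈ K`,
`t ∈ I`.  Here `I = [0,T]` or `I = [0,∞)`, and elements of `C(I;·)` are
represented by continuous functions on `ℝ`, unique up to their values on `I`. -/
theorem inclusion_state_dependent_constraint_existence_uniqueness
    {X : Type*} [NormedAddCommGroup X] [InnerProductSpace ℝ X] [CompleteSpace X]
    (I : Set ℝ) (hI : (∃ T : ℝ, 0 < T ∧ I = Set.Icc 0 T) ∨ I = Set.Ici 0)
    (K : Set X) (hKne : K.Nonempty) (hKcl : IsClosed K) (hKcv : Convex ℝ K)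
    (hKcone : ∀ c : ℝ, 0 < c → ∀ x ∈ K, c • x ∈ K) (hK0 : (0 : X) ∈ K)
    (A : X → X) (mA : ℝ) (hmA : 0 < mA)
    (hAmono : ∀ u v : X, mA * ‖u - v‖ ^ 2 ≤ ⟪A u - A v, u - v⟫)
    (hAlip : ∃ LA : ℝ, 0 < LA ∧ ∀ u v : X, ‖A u - A v‖ ≤ LA * ‖u - v‖)
    (S : (ℝ → X) → (ℝ → X))
    (hSmap : ∀ u : ℝ → X, Continuous u → Continuous (S u))
    (LS : Set ℝ → ℝ)
    (hS : ∀ J : Set ℝ, IsCompact J → J ⊆ I → 0 < LS J ∧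
      ∀ u₁ u₂ : ℝ → X, Continuous u₁ → Continuous u₂ → ∀ t ∈ J,
        ‖S u₁ t - S u₂ t‖ ≤ LS J * ∫ s in (0:ℝ)..t, ‖u₁ s - u₂ s‖)
    (j : X → X → ℝ)
    (hjconv : ∀ η : X, ConvexOn ℝ K (j η))
    (hjpos : ∀ η : X, ∀ l : ℝ, 0 < l → ∀ v ∈ K, j η (l • v) = l * j η v)
    (hjlip : ∀ η : X, ∃ Lj : ℝ, ∀ v ∈ K, ∀ w ∈ K, |j η v - j η w| ≤ Lj * ‖v - w‖)
    (αj : ℝ) (hαj : 0 ≤ αj)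
    (hjb : ∀ η₁ η₂ : X, ∀ v₁ ∈ K, ∀ v₂ ∈ K,
      j η₁ v₂ - j η₁ v₁ + j η₂ v₁ - j η₂ v₂ ≤ αj * ‖η₁ - η₂‖ * ‖v₁ - v₂‖)
    (f : ℝ → X) (hf : Continuous f)
    (hsmall : αj + 1 < mA) :
    ∃ u : ℝ → X,
      (Continuous u ∧ ∀ t ∈ I, u t ∈ K ∧
        ∀ v ∈ K, j (u t) v - j (u t) (u t) ≥ ⟪f t - A (u t) - S u t, v - u t⟫) ∧
      ∀ u' : ℝ → X,
        (Continuous u' ∧ ∀ t ∈ I, u' t ∈ K ∧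
          ∀ v ∈ K, j (u' t) v - j (u' t) (u' t) ≥
            ⟪f t - A (u' t) - S u' t, v - u' t⟫) →
        ∀ t ∈ I, u' t = u t := by
  classical
  have hsm : αj < mA := by linarith
  have hpos : (0:ℝ) < mA - αj := by linarith
  -- the elliptic solution operator
  have hex : ∀ g : X, ∃ u ∈ K, ∀ v ∈ K, 0 ≤ ⟪A u - g, v - u⟫ + j u v - j u u :=
    fun g => ell_exists K hKne hKcl hKcv A mA hmA hAmono hAlip j hjconv hjlip αj hαj hjb hsm g
  choose σ hσK hσVI using hex
  set κ : ℝ := 1 / (mA - αj) with hκdef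
  have hκpos : 0 < κ := by positivity
  have hσlip : ∀ g₁ g₂ : X, ‖σ g₁ - σ g₂‖ ≤ κ * ‖g₁ - g₂‖ := by
    intro g₁ g₂
    have h := ell_lip K A mA hAmono j αj hjb hsm g₁ g₂ (σ g₁) (σ g₂)
      (hσK g₁) (hσK g₂) (hσVI g₁) (hσVI g₂)
    rw [hκdef, one_div, inv_mul_eq_div, le_div_iff₀ hpos]
    linarith [h]
  have hσuni : ∀ (g w : X), w ∈ K →
      (∀ v ∈ K, 0 ≤ ⟪A w - g, v - w⟫ + j w v - j w w) → w = σ g := by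
    intro g w hw hVI
    have h := ell_lip K A mA hAmono j αj hjb hsm g g w (σ g) hw (hσK g) hVI (hσVI g)
    have h0 : ‖w - σ g‖ ≤ 0 := by
      have : ‖g - g‖ = 0 := by simp
      nlinarith [norm_nonneg (w - σ g)]
    exact sub_eq_zero.mp (norm_le_zero_iff.mp h0)
  -- translation between the two VI formulations
  have hkeyinner : ∀ w gf gS v : X,
      ⟪A w - (gf - gS), v - w⟫ = -⟪gf - A w - gS, v - w⟫ := by
    intro w gf gS v
    rw [show A w - (gf - gS) = -(gf - A w - gS) by abel, inner_neg_left]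
  have hfix_to_VI : ∀ (u : ℝ → X) (t : ℝ), u t = σ (f t - S u t) →
      u t ∈ K ∧ ∀ v ∈ K, j (u t) v - j (u t) (u t) ≥ ⟪f t - A (u t) - S u t, v - u t⟫ := by
    intro u t hfix
    constructor
    · rw [hfix]; exact hσK _
    · intro v hv
      have h := hσVI (f t - S u t) v hv
      rw [← hfix] at h
      have e := hkeyinner (u t) (f t) (S u t) v
      rw [e] at h
      linarith
  have hVI_to_fix : ∀ (u : ℝ → X) (t : ℝ), u t ∈ K →
      (∀ v ∈ K, j (u t) v - j (u t) (u t) ≥ ⟪f t - A (u t) - S u t, v - u t⟫) →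
      u t = σ (f t - S u t) := by
    intro u t hmem hVI
    apply hσuni _ _ hmem
    intro v hv
    have h := hVI v hv
    have e := hkeyinner (u t) (f t) (S u t) v
    rw [e]
    linarith
  -- local existence
  have loc_sol : ∀ b : ℝ, 0 < b → Set.Icc (0:ℝ) b ⊆ I →
      ∃ u : ℝ → X, Continuous u ∧ ∀ t ∈ Set.Icc (0:ℝ) b, u t = σ (f t - S u t) := by
    intro b hb hsub
    obtain ⟨hLpos, hvol⟩ := hS (Set.Icc 0 b) isCompact_Icc hsub
    exact picard_interval b hb σ κ hκpos.le hσlip S hSmap (LS (Set.Icc 0 b)) hLpos.le hvol f hf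
  -- local uniqueness
  have loc_uni : ∀ b : ℝ, 0 < b → Set.Icc (0:ℝ) b ⊆ I →
      ∀ u u' : ℝ → X, Continuous u → Continuous u' →
      (∀ t ∈ Set.Icc (0:ℝ) b, u t = σ (f t - S u t)) →
      (∀ t ∈ Set.Icc (0:ℝ) b, u' t = σ (f t - S u' t)) →
      ∀ t ∈ Set.Icc (0:ℝ) b, u t = u' t := by
    intro b hb hsub u u' hu hu' hfixu hfixu'
    obtain ⟨hLpos, hvol⟩ := hS (Set.Icc 0 b) isCompact_Icc hsub
    apply gronwall_zero b (κ * LS (Set.Icc 0 b)) (by positivity) u u' hu hu'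
    intro t ht
    have h1 : ‖u t - u' t‖ ≤ κ * ‖(f t - S u t) - (f t - S u' t)‖ := by
      rw [hfixu t ht, hfixu' t ht]
      exact hσlip _ _
    have e : (f t - S u t) - (f t - S u' t) = -(S u t - S u' t) := by abel
    rw [e, norm_neg] at h1
    have h2 := hvol u u' hu hu' t ht
    calc ‖u t - u' t‖ ≤ κ * ‖S u t - S u' t‖ := h1
      _ ≤ κ * (LS (Set.Icc 0 b) * ∫ s in (0:ℝ)..t, ‖u s - u' s‖) :=
          mul_le_mul_of_nonneg_left h2 hκpos.le
      _ = κ * LS (Set.Icc 0 b) * ∫ s in (0:ℝ)..t, ‖u s - u' s‖ := by ring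
  -- case split on the interval
  rcases hI with ⟨T, hT, rfl⟩ | rfl
  · -- I = Icc 0 T
    obtain ⟨u, huc, hufix⟩ := loc_sol T hT (subset_refl _)
    refine ⟨u, ⟨huc, fun t ht => hfix_to_VI u t (hufix t ht)⟩, ?_⟩
    rintro u' ⟨hu'c, hu'p⟩ t ht
    have hfixu' : ∀ s ∈ Set.Icc (0:ℝ) T, u' s = σ (f s - S u' s) := by
      intro s hs
      exact hVI_to_fix u' s (hu'p s hs).1 (hu'p s hs).2
    exact loc_uni T hT (subset_refl _) u' u hu'c huc hfixu' hufix t ht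
  · -- I = Ici 0
    have hsub : ∀ n : ℕ, Set.Icc (0:ℝ) ((n:ℝ)+1) ⊆ Set.Ici 0 := fun n t ht => ht.1
    have hn : ∀ n : ℕ, ∃ u : ℝ → X, Continuous u ∧
        ∀ t ∈ Set.Icc (0:ℝ) ((n:ℝ)+1), u t = σ (f t - S u t) :=
      fun n => loc_sol ((n:ℝ)+1) (by positivity) (hsub n)
    choose uN huNc huNfix using hn
    have agree : ∀ a c : ℕ, ∀ s : ℝ, 0 ≤ s → s ≤ ((min a c : ℕ):ℝ) + 1 → uN a s = uN c s := by
      intro a c s h0 h1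
      have hmina : ((min a c : ℕ):ℝ) + 1 ≤ (a:ℝ) + 1 := by
        have : (min a c : ℕ) ≤ a := min_le_left _ _
        exact_mod_cast Nat.add_le_add_right this 1
      have hminc : ((min a c : ℕ):ℝ) + 1 ≤ (c:ℝ) + 1 := by
        have : (min a c : ℕ) ≤ c := min_le_right _ _
        exact_mod_cast Nat.add_le_add_right this 1
      refine loc_uni (((min a c : ℕ):ℝ) + 1) (by positivity) (fun t ht => ht.1)
        (uN a) (uN c) (huNc a) (huNc c) ?_ ?_ s ⟨h0, h1⟩
      · intro t ht
        exact huNfix a t ⟨ht.1, ht.2.trans hmina⟩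
      · intro t ht
        exact huNfix c t ⟨ht.1, ht.2.trans hminc⟩
    set u : ℝ → X := fun t => uN ⌈max t 0⌉₊ (max t 0) with hudef
    have hkey : ∀ (n : ℕ) (t : ℝ), 0 ≤ t → t ≤ (n:ℝ) + 1 → u t = uN n t := by
      intro n t h0 h1
      have hmax : max t 0 = t := max_eq_left h0
      have hle : t ≤ ((min ⌈t⌉₊ n : ℕ):ℝ) + 1 := by
        have h2 : t ≤ (⌈t⌉₊ : ℝ) := Nat.le_ceil t
        have h3 : t - 1 ≤ min ((⌈t⌉₊:ℕ):ℝ) ((n:ℕ):ℝ) := le_min (by linarith) (by linarith)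
        rw [Nat.cast_min]
        linarith
      calc u t = uN ⌈t⌉₊ t := by rw [hudef]; simp only [hmax]
        _ = uN n t := agree ⌈t⌉₊ n t h0 hle
    have hucont : Continuous u := by
      rw [continuous_iff_continuousAt]
      intro t₀
      set M : ℕ := ⌈max t₀ 0⌉₊ + 1 with hMdef
      have ht₀M : t₀ < (M:ℝ) := by
        have h1 : t₀ ≤ max t₀ 0 := le_max_left _ _
        have h2 : max t₀ 0 ≤ (⌈max t₀ 0⌉₊ : ℝ) := Nat.le_ceil _
        have h3 : ((⌈max t₀ 0⌉₊ : ℕ):ℝ) < (M:ℝ) := by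
          rw [hMdef]; push_cast; linarith
        linarith
      have heq : ∀ s ∈ Set.Iio ((M:ℝ)), u s = uN M (max s 0) := by
        intro s hs
        have h0 : (0:ℝ) ≤ max s 0 := le_max_right _ _
        have h1 : max s 0 ≤ ((min ⌈max s 0⌉₊ M : ℕ):ℝ) + 1 := by
          have h2 : max s 0 ≤ (⌈max s 0⌉₊ : ℝ) := Nat.le_ceil _
          have h3 : max s 0 ≤ (M:ℝ) := max_le (le_of_lt hs) (by positivity)
          have h4 : max s 0 - 1 ≤ min ((⌈max s 0⌉₊:ℕ):ℝ) ((M:ℕ):ℝ) :=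
            le_min (by linarith) (by linarith)
          rw [Nat.cast_min]
          linarith
        exact agree ⌈max s 0⌉₊ M (max s 0) h0 h1
      have hc : ContinuousAt (fun s => uN M (max s 0)) t₀ :=
        ((huNc M).comp (continuous_id.max continuous_const)).continuousAt
      apply hc.congr
      filter_upwards [Iio_mem_nhds ht₀M] with s hs
      exact (heq s hs).symm
    have hufix : ∀ t : ℝ, 0 ≤ t → u t = σ (f t - S u t) := by
      intro t h0
      set n : ℕ := ⌈t⌉₊ with hndef
      have ht1 : t ≤ (n:ℝ) + 1 := by
        have := Nat.le_ceil t
        linarith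
      have hA : u t = uN n t := hkey n t h0 ht1
      obtain ⟨hLpos, hvol⟩ := hS (Set.Icc 0 ((n:ℝ)+1)) isCompact_Icc (hsub n)
      have hb := hvol u (uN n) hucont (huNc n) t ⟨h0, ht1⟩
      have hint : (∫ s in (0:ℝ)..t, ‖u s - uN n s‖) = 0 := by
        rw [intervalIntegral.integral_congr (g := fun _ => (0:ℝ))]
        · exact intervalIntegral.integral_zero
        · intro s hs
          rw [Set.uIcc_of_le h0] at hs
          have := hkey n s hs.1 (hs.2.trans ht1)
          simp [this]
      have hSeq : S u t = S (uN n) t := by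
        rw [hint, mul_zero] at hb
        exact sub_eq_zero.mp (norm_le_zero_iff.mp hb)
      rw [hA, huNfix n t ⟨h0, ht1⟩, ← hSeq]
    refine ⟨u, ⟨hucont, fun t ht => hfix_to_VI u t (hufix t ht)⟩, ?_⟩
    rintro u' ⟨hu'c, hu'p⟩ t ht
    set n : ℕ := ⌈t⌉₊ with hndef
    have ht1 : t ≤ (n:ℝ) + 1 := by
      have := Nat.le_ceil t
      linarith
    refine loc_uni ((n:ℝ)+1) (by positivity) (hsub n) u' u hu'c hucont ?_ ?_ t ⟨ht, ht1⟩
    · intro s hs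
      exact hVI_to_fix u' s (hu'p s hs.1).1 (hu'p s hs.1).2
    · intro s hs
      exact hufix s hs.1
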